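/- Let h₀ and h be strictly positive probability mass functions on a finite set Θ, with h not uniform, and suppose Σ_θ [h₀(θ) − h(θ)]·log h(θ) ≠ 0. Then there exists α ≥ 0 such that KL(h₀ ‖ h^(α)) < KL(h₀ ‖ h), where h^(α)(θ) = h(θ)^α / Σ h(θ')^α. -/

import Mathlib

open Real BigOperators

/-- Let `h₀` and `h` be strictly positive pmfs on a finite set, with
`h` not uniform, and suppose `Σ_θ [h₀(θ) − h(θ)]·log h(θ) ≠ 0`. Then there exists
`α ≥ 0` with `KL(h₀ ‖ h^(α)) < KL(h₀ ‖ h)`, where `h^(α)(θ) = h(θ)^α / Σ h(θ')^α`. -/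
theorem exists_alpha_scaled_closer
    {Θ : Type*} [Fintype Θ] [Nonempty Θ]
    (h₀ h : Θ → ℝ)
    (h₀pos : ∀ θ, 0 < h₀ θ)
    (hpos : ∀ θ, 0 < h θ)
    (h₀sum : ∑ θ, h₀ θ = 1)
    (hsum : ∑ θ, h θ = 1)
    (hnonunif : ∃ θ₁ θ₂, h θ₁ ≠ h θ₂)
    (hderiv : ∑ θ, (h₀ θ - h θ) * Real.log (h θ) ≠ 0) :
    ∃ α : ℝ, 0 ≤ α ∧
      (∑ θ, h₀ θ * Real.log (h₀ θ / (h θ ^ α / ∑ θ', h θ' ^ α))) <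
        ∑ θ, h₀ θ * Real.log (h₀ θ / h θ) := by
  classical
  set c : ℝ := ∑ θ, h₀ θ * Real.log (h θ) with hc
  set g : ℝ → ℝ := fun α => Real.log (∑ θ, h θ ^ α) - α * c with hgdef
  have hSpos : ∀ α : ℝ, 0 < ∑ θ, h θ ^ α := fun α =>
    Finset.sum_pos (fun θ _ => Real.rpow_pos_of_pos (hpos θ) α) Finset.univ_nonempty
  -- Sum at α = 1 is 1
  have hS1 : (∑ θ, h θ ^ (1:ℝ)) = 1 := by simp [Real.rpow_one, hsum]
  -- derivative of g at 1
  set d : ℝ := (∑ θ, h θ * Real.log (h θ)) - c with hd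
  have hdne : d ≠ 0 := by
    intro h'
    apply hderiv
    have : ∑ θ, (h₀ θ - h θ) * Real.log (h θ)
        = c - ∑ θ, h θ * Real.log (h θ) := by
      rw [hc, ← Finset.sum_sub_distrib]
      congr 1; ext θ; ring
    rw [this]
    linarith [h']
  have hgd : HasDerivAt g d 1 := by
    have h1 : HasDerivAt (fun α : ℝ => ∑ θ, h θ ^ α)
        (∑ θ, h θ * Real.log (h θ)) 1 := by
      have := HasDerivAt.fun_sum (u := Finset.univ)
        (A := fun θ (α : ℝ) => h θ ^ α)
        (A' := fun θ => h θ * Real.log (h θ)) (x := 1)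
        (fun θ _ => by
          have := (Real.hasStrictDerivAt_const_rpow (hpos θ) 1).hasDerivAt
          simpa [Real.rpow_one] using this)
      simpa using this
    have h2 : HasDerivAt (fun α : ℝ => Real.log (∑ θ, h θ ^ α))
        ((∑ θ, h θ * Real.log (h θ)) / (∑ θ, h θ ^ (1:ℝ))) 1 :=
      h1.log (ne_of_gt (hSpos 1))
    rw [hS1, div_one] at h2
    have h3 : HasDerivAt (fun α : ℝ => α * c) c 1 := by
      simpa using (hasDerivAt_id (1:ℝ)).mul_const c
    simpa [hgdef, hd] using h2.fun_sub h3
  -- find α ≥ 0 with g α < g 1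
  have hslope : Filter.Tendsto (slope g 1) (nhdsWithin 1 {(1:ℝ)}ᶜ) (nhds d) :=
    hasDerivAt_iff_tendsto_slope.mp hgd
  have key : ∃ α : ℝ, 0 ≤ α ∧ g α < g 1 := by
    rcases lt_or_gt_of_ne hdne with hneg | hpos'
    · -- d < 0 : take α > 1
      have h1 : ∀ᶠ x in nhdsWithin 1 {(1:ℝ)}ᶜ, slope g 1 x < 0 :=
        hslope.eventually (Filter.Tendsto.eventually_lt_const hneg Filter.tendsto_id)
      have h2 : ∀ᶠ x in nhdsWithin (1:ℝ) (Set.Ioi 1), slope g 1 x < 0 :=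
        h1.filter_mono (nhdsWithin_mono 1 (fun x hx => by
          simp only [Set.mem_compl_iff, Set.mem_singleton_iff]
          exact ne_of_gt (Set.mem_Ioi.mp hx)))
      have h3 : ∀ᶠ x in nhdsWithin (1:ℝ) (Set.Ioi 1), x ∈ Set.Ioi (1:ℝ) :=
        self_mem_nhdsWithin
      rcases (h2.and h3).exists with ⟨x, hx1, hx2⟩
      refine ⟨x, le_of_lt (lt_trans one_pos hx2), ?_⟩
      have hx3 : (0:ℝ) < x - 1 := by simpa using sub_pos.mpr (Set.mem_Ioi.mp hx2)
      have hsl : (g x - g 1) / (x - 1) < 0 := by simpa [slope_def_field] using hx1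
      have := mul_neg_of_neg_of_pos hsl hx3
      rw [div_mul_cancel₀ _ (ne_of_gt hx3)] at this
      linarith
    · -- d > 0 : take α < 1, α > 0
      have h1 : ∀ᶠ x in nhdsWithin 1 {(1:ℝ)}ᶜ, 0 < slope g 1 x :=
        hslope.eventually (Filter.Tendsto.eventually_const_lt hpos' Filter.tendsto_id)
      have h2 : ∀ᶠ x in nhdsWithin (1:ℝ) (Set.Iio 1), 0 < slope g 1 x :=
        h1.filter_mono (nhdsWithin_mono 1 (fun x hx => by
          simp only [Set.mem_compl_iff, Set.mem_singleton_iff]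
          exact ne_of_lt (Set.mem_Iio.mp hx)))
      have h3 : ∀ᶠ x in nhdsWithin (1:ℝ) (Set.Iio 1), x ∈ Set.Ioo (0:ℝ) 1 :=
        Ioo_mem_nhdsLT_of_mem (by norm_num : (1:ℝ) ∈ Set.Ioc 0 1)
      rcases (h2.and h3).exists with ⟨x, hx1, hx2⟩
      refine ⟨x, le_of_lt hx2.1, ?_⟩
      have hx3 : x - 1 < 0 := sub_neg.mpr hx2.2
      have hsl : 0 < (g x - g 1) / (x - 1) := by simpa [slope_def_field] using hx1
      have := mul_neg_of_pos_of_neg hsl hx3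
      rw [div_mul_cancel₀ _ (ne_of_lt hx3)] at this
      linarith
  rcases key with ⟨α, hα0, hαlt⟩
  refine ⟨α, hα0, ?_⟩
  -- rewrite both sides
  have lhs_eq : ∀ β : ℝ, (∑ θ, h₀ θ * Real.log (h₀ θ / (h θ ^ β / ∑ θ', h θ' ^ β)))
      = (∑ θ, h₀ θ * Real.log (h₀ θ)) - β * c + Real.log (∑ θ', h θ' ^ β) := by
    intro β
    have hterm : ∀ θ, h₀ θ * Real.log (h₀ θ / (h θ ^ β / ∑ θ', h θ' ^ β))
        = h₀ θ * Real.log (h₀ θ) - β * (h₀ θ * Real.log (h θ))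
          + h₀ θ * Real.log (∑ θ', h θ' ^ β) := by
      intro θ
      rw [Real.log_div (ne_of_gt (h₀pos θ))
          (ne_of_gt (div_pos (Real.rpow_pos_of_pos (hpos θ) β) (hSpos β))),
        Real.log_div (ne_of_gt (Real.rpow_pos_of_pos (hpos θ) β)) (ne_of_gt (hSpos β)),
        Real.log_rpow (hpos θ)]
      ring
    calc (∑ θ, h₀ θ * Real.log (h₀ θ / (h θ ^ β / ∑ θ', h θ' ^ β)))
        = ∑ θ, (h₀ θ * Real.log (h₀ θ) - β * (h₀ θ * Real.log (h θ))
            + h₀ θ * Real.log (∑ θ', h θ' ^ β)) := by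
          exact Finset.sum_congr rfl (fun θ _ => hterm θ)
      _ = (∑ θ, h₀ θ * Real.log (h₀ θ)) - β * c + Real.log (∑ θ', h θ' ^ β) := by
          rw [Finset.sum_add_distrib, Finset.sum_sub_distrib, ← Finset.mul_sum,
            ← Finset.sum_mul, h₀sum, one_mul, hc]
  have rhs_eq : (∑ θ, h₀ θ * Real.log (h₀ θ / h θ))
      = (∑ θ, h₀ θ * Real.log (h₀ θ)) - c := by
    rw [hc, ← Finset.sum_sub_distrib]
    refine Finset.sum_congr rfl (fun θ _ => ?_)
    rw [Real.log_div (ne_of_gt (h₀pos θ)) (ne_of_gt (hpos θ))]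
    ring
  rw [lhs_eq α, rhs_eq]
  have hg1 : g 1 = -c := by
    show Real.log (∑ θ, h θ ^ (1:ℝ)) - 1 * c = -c
    rw [hS1, Real.log_one, one_mul, zero_sub]
  have hgα : g α = Real.log (∑ θ', h θ' ^ α) - α * c := rfl
  rw [hg1, hgα] at hαlt
  linarith
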